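/- Let G be a directed multigraph on n vertices with distinguished vertex s and Laplacian L_G = D_G - A_G (in-degree diagonal minus adjacency). Then det(L_G^{-s}), the determinant of the Laplacian with the row and column of s deleted, equals the number of out-branchings of G rooted at s. (Directed Matrix-Tree theorem, derived via the Cauchy–Binet formula and the incidence factorization L_G^{-s} = (I_G^{-s} - O_G^{-s})(I_G^{-s})ᵀ.) -/

import Mathlib

open Matrix
open scoped Classical

/-- `X` is an out-branching (spanning arborescence) rooted at `s`. -/
def IsOutBranching {V E : Type} (src tgt : E → V) (X : Finset E) (s : V) : Prop :=
  (∀ v : V, v ≠ s → ∃! e, e ∈ X ∧ tgt e = v) ∧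
  (∀ e ∈ X, tgt e ≠ s) ∧
  (∀ v : V, Relation.ReflTransGen (fun a b => ∃ e ∈ X, src e = a ∧ tgt e = b) s v)

lemma det_one_sub_of_isNilpotent {n : Type} [Fintype n] [DecidableEq n]
    (N : Matrix n n ℤ) (h : IsNilpotent N) : (1 - N).det = 1 := by
  have hu := Matrix.isUnit_charpolyRev_of_isNilpotent h
  obtain ⟨r, hr, hCr⟩ := Polynomial.isUnit_iff.mp hu
  have h0 : Polynomial.eval 0 N.charpolyRev = 1 := Matrix.eval_charpolyRev
  have hone : N.charpolyRev = 1 := by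
    rw [← hCr] at h0 ⊢
    rw [Polynomial.eval_C] at h0
    rw [h0, Polynomial.C_1]
  have h1 : Polynomial.eval 1 N.charpolyRev = (1 - N).det := by
    rw [Matrix.charpolyRev, ← Polynomial.coe_evalRingHom, RingHom.map_det]
    congr 1
    ext i j
    simp [Matrix.map_apply, Matrix.one_apply, Matrix.sub_apply, Matrix.smul_apply, apply_ite]
  rw [← h1, hone, Polynomial.eval_one]

lemma det_functional {V : Type} [Fintype V] [DecidableEq V] (s : V) (p : V → V) (hp : p s = s) :
    (Matrix.of fun w u : {v : V // v ≠ s} =>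
      (if w = u then (1:ℤ) else 0) - (if p w.1 = u.1 then 1 else 0)).det
    = if ∀ v : V, ∃ k, p^[k] v = s then 1 else 0 := by
  classical
  set N : Matrix {v : V // v ≠ s} {v : V // v ≠ s} ℤ :=
    Matrix.of fun w u => if p w.1 = u.1 then (1:ℤ) else 0 with hN
  have hM : (Matrix.of fun w u : {v : V // v ≠ s} =>
      (if w = u then (1:ℤ) else 0) - (if p w.1 = u.1 then 1 else 0)) = 1 - N := by
    ext w u
    simp [hN, Matrix.one_apply]
  rw [hM]
  by_cases hgood : ∀ v : V, ∃ k, p^[k] v = s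
  · rw [if_pos hgood]
    have hpow : ∀ k : ℕ, N ^ k =
        Matrix.of fun w u : {v : V // v ≠ s} => if p^[k] w.1 = u.1 then (1:ℤ) else 0 := by
      intro k
      induction k with
      | zero =>
        ext w u
        simp [Matrix.one_apply, Subtype.ext_iff]
        exact if_congr Iff.rfl rfl rfl
      | succ k ih =>
        ext w u
        rw [pow_succ, Matrix.mul_apply]
        by_cases hs : p^[k] w.1 = s
        · have hz : ∀ x : {v : V // v ≠ s}, (N ^ k) w x * N x u = 0 := by
            intro x
            rw [ih]
            simp only [Matrix.of_apply]
            rw [if_neg, zero_mul]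
            rw [hs]
            exact fun h => x.2 h.symm
          rw [Finset.sum_congr rfl fun x _ => hz x, Finset.sum_const_zero]
          rw [Matrix.of_apply, if_neg]
          rw [Function.iterate_succ_apply', hs, hp]
          exact fun h => u.2 h.symm
        · rw [Finset.sum_eq_single (⟨p^[k] w.1, hs⟩ : {v : V // v ≠ s})]
          · rw [ih]
            simp [hN, Function.iterate_succ_apply']
          · intro x _ hx
            rw [ih]
            simp only [Matrix.of_apply]
            rw [if_neg, zero_mul]
            intro h
            exact hx (Subtype.ext h.symm)
          · intro h
            exact absurd (Finset.mem_univ _) h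
    have hnil : IsNilpotent N := by
      refine ⟨Finset.univ.sup fun v : V => Nat.find (hgood v), ?_⟩
      ext w u
      rw [hpow]
      simp only [Matrix.of_apply, Matrix.zero_apply]
      rw [if_neg]
      have hk : p^[Nat.find (hgood w.1)] w.1 = s := Nat.find_spec (hgood w.1)
      have hle : Nat.find (hgood w.1) ≤ Finset.univ.sup fun v : V => Nat.find (hgood v) :=
        Finset.le_sup (f := fun v : V => Nat.find (hgood v)) (Finset.mem_univ w.1)
      have hKs : p^[Finset.univ.sup fun v : V => Nat.find (hgood v)] w.1 = s := by
        have h2 := Function.iterate_add_apply p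
          ((Finset.univ.sup fun v : V => Nat.find (hgood v)) - Nat.find (hgood w.1))
          (Nat.find (hgood w.1)) w.1
        rw [Nat.sub_add_cancel hle] at h2
        rw [h2, hk, Function.iterate_fixed hp]
      rw [hKs]
      exact fun h => u.2 h.symm
    exact det_one_sub_of_isNilpotent N hnil
  · rw [if_neg hgood]
    push_neg at hgood
    obtain ⟨v, hv⟩ := hgood
    have key : ∀ i j : ℕ, i < j → p^[i] v = p^[j] v → (1 - N).det = 0 := by
      intro i j hlt heq
      set u := p^[i] v with hu
      have hmu : p^[j - i] u = u := by
        rw [hu, ← Function.iterate_add_apply]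
        have hji : j - i + i = j := by omega
        rw [hji, ← heq]
      have hus : ∀ k, p^[k] u ≠ s := by
        intro k
        rw [hu, ← Function.iterate_add_apply]
        exact hv _
      set C : Finset V := (Finset.range (j - i)).image (fun i' => p^[i'] u) with hC
      have huC : u ∈ C := Finset.mem_image.mpr ⟨0, Finset.mem_range.mpr (by omega), rfl⟩
      have hCs : ∀ x ∈ C, x ≠ s := by
        intro x hx
        obtain ⟨i', _, rfl⟩ := Finset.mem_image.mp hx
        exact hus i'
      have hmaps : ∀ x ∈ C, p x ∈ C := by
        intro x hx
        obtain ⟨i', hi', rfl⟩ := Finset.mem_image.mp hx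
        rw [← Function.iterate_succ_apply' p i' u]
        rcases (Nat.succ_le_of_lt (Finset.mem_range.mp hi')).lt_or_eq with h | h
        · exact Finset.mem_image.mpr ⟨i' + 1, Finset.mem_range.mpr h, rfl⟩
        · rw [h, hmu]
          exact huC
      have hsurj : ∀ x ∈ C, ∃ y ∈ C, p y = x := by
        intro x hx
        obtain ⟨i', hi', rfl⟩ := Finset.mem_image.mp hx
        have hi'' := Finset.mem_range.mp hi'
        rcases Nat.eq_zero_or_pos i' with h | h
        · subst h
          refine ⟨p^[j - i - 1] u,
            Finset.mem_image.mpr ⟨j - i - 1, Finset.mem_range.mpr (by omega), rfl⟩, ?_⟩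
          simp only [Function.iterate_zero_apply]
          rw [← Function.iterate_succ_apply' p (j - i - 1) u]
          have h1 : p^[j - i - 1 + 1] u = u := by
            rw [show j - i - 1 + 1 = j - i from by omega]
            exact hmu
          exact h1
        · refine ⟨p^[i' - 1] u,
            Finset.mem_image.mpr ⟨i' - 1, Finset.mem_range.mpr (by omega), rfl⟩, ?_⟩
          rw [← Function.iterate_succ_apply' p (i' - 1) u]
          have h1 : i' - 1 + 1 = i' := by omega
          show p^[i' - 1 + 1] u = p^[i'] u
          rw [h1]
      have hinj : ∀ y₁ ∈ C, ∀ y₂ ∈ C, p y₁ = p y₂ → y₁ = y₂ := by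
        intro y₁ h₁ y₂ h₂ hpy
        exact Finset.inj_on_of_surj_on_of_card_le (fun a _ => p a)
          (fun a ha => hmaps a ha)
          (fun b hb => by obtain ⟨y, hy, h⟩ := hsurj b hb; exact ⟨y, hy, h⟩)
          le_rfl h₁ h₂ hpy
      by_contra hdet0
      have hvm : (fun w : {v : V // v ≠ s} => if w.1 ∈ C then (1:ℤ) else 0) ᵥ* (1 - N) = 0 := by
        funext u0
        simp only [Matrix.vecMul, dotProduct, Pi.zero_apply]
        have hterm : ∀ w : {v : V // v ≠ s},
            (if w.1 ∈ C then (1:ℤ) else 0) * (1 - N) w u0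
            = (if w = u0 then (if w.1 ∈ C then (1:ℤ) else 0) else 0)
              - (if w.1 ∈ C ∧ p w.1 = u0.1 then (1:ℤ) else 0) := by
          intro w
          simp only [Matrix.sub_apply, Matrix.one_apply, hN, Matrix.of_apply]
          rcases eq_or_ne w u0 with rfl | h2
          · by_cases h1 : w.1 ∈ C <;> by_cases h3 : p w.1 = w.1 <;> simp [h1, h3]
          · by_cases h1 : w.1 ∈ C <;> by_cases h3 : p w.1 = u0.1 <;> simp [h1, h2, h3]
        rw [Finset.sum_congr rfl fun w _ => hterm w, Finset.sum_sub_distrib]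
        rw [Finset.sum_ite_eq' Finset.univ u0 (fun w => if w.1 ∈ C then (1:ℤ) else 0)]
        rw [if_pos (Finset.mem_univ u0)]
        have hS2 : (∑ w : {v : V // v ≠ s}, if w.1 ∈ C ∧ p w.1 = u0.1 then (1:ℤ) else 0)
            = if u0.1 ∈ C then 1 else 0 := by
          by_cases hu0 : u0.1 ∈ C
          · rw [if_pos hu0]
            obtain ⟨y, hyC, hpy⟩ := hsurj u0.1 hu0
            rw [Finset.sum_eq_single (⟨y, hCs y hyC⟩ : {v : V // v ≠ s})]
            · rw [if_pos ⟨hyC, hpy⟩]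
            · intro x _ hx
              rw [if_neg]
              rintro ⟨hxC, hpx⟩
              exact hx (Subtype.ext (hinj x.1 hxC y hyC (by rw [hpx, hpy])))
            · intro h
              exact absurd (Finset.mem_univ _) h
          · rw [if_neg hu0]
            rw [Finset.sum_eq_zero]
            intro x _
            rw [if_neg]
            rintro ⟨hxC, hpx⟩
            exact hu0 (hpx ▸ hmaps x.1 hxC)
        rw [hS2]
        simp
      have hz := Matrix.eq_zero_of_vecMul_eq_zero hdet0 hvm
      have hu' : u ≠ s := by simpa using hus 0
      have := congrFun hz ⟨u, hu'⟩
      simp [huC] at this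
    obtain ⟨i, j, hij, hEq⟩ := Finite.exists_ne_map_eq_of_infinite (fun k : ℕ => p^[k] v)
    rcases hij.lt_or_gt with h | h
    · exact key i j h hEq
    · exact key j i h hEq.symm

/-- The parent map on vertices induced by a choice `g` of incoming edge for each non-root
vertex. -/
noncomputable def parentMap {V E : Type} [DecidableEq V] (src : E → V) (s : V)
    (g : {v : V // v ≠ s} → E) : V → V :=
  fun x => if h : x = s then s else src (g ⟨x, h⟩)

lemma choose_eq {E : Type} {p : E → Prop} (h : ∃! e, p e) {e : E} (he : p e) :
    h.exists.choose = e :=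
  h.unique h.exists.choose_spec he

/-- Directed Matrix-Tree theorem: for a loopless directed multigraph, the
    determinant of the (in-degree) Laplacian with the row and column of s
    deleted equals the number of out-branchings rooted at s. -/
theorem directed_matrix_tree
    {V E : Type} [Fintype V] [Fintype E] [DecidableEq V] [DecidableEq E]
    (src tgt : E → V) (hloop : ∀ e, src e ≠ tgt e) (s : V) :
    (Matrix.of fun u w : {v : V // v ≠ s} =>
        ((if u = w then ((Finset.univ.filter fun e => tgt e = u.1).card : ℤ) else 0) -
          ((Finset.univ.filter fun e => src e = u.1 ∧ tgt e = w.1).card : ℤ))).det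
    = (((Finset.univ : Finset (Finset E)).filter fun X =>
          IsOutBranching src tgt X s).card : ℤ) := by
  classical
  set A : {v : V // v ≠ s} → Finset E := fun w => Finset.univ.filter fun e => tgt e = w.1
    with hA
  set vec : E → {v : V // v ≠ s} → ℤ :=
    fun e u => (if tgt e = u.1 then 1 else 0) - (if src e = u.1 then 1 else 0) with hvec
  have h1 : (Matrix.of fun u w : {v : V // v ≠ s} =>
        ((if u = w then ((Finset.univ.filter fun e => tgt e = u.1).card : ℤ) else 0) -
          ((Finset.univ.filter fun e => src e = u.1 ∧ tgt e = w.1).card : ℤ)))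
      = (Matrix.of fun w u : {v : V // v ≠ s} => ∑ e ∈ A w, vec e u)ᵀ := by
    ext u w
    simp only [Matrix.transpose_apply, Matrix.of_apply, hvec, hA]
    rw [Finset.sum_sub_distrib, Finset.sum_boole, Finset.sum_boole,
      Finset.filter_filter, Finset.filter_filter]
    congr 1
    · by_cases h : u = w
      · subst h
        rw [if_pos rfl]
        norm_cast
        congr 1
        apply Finset.filter_congr
        intro e _
        simp
      · rw [if_neg h]
        have hemp : (Finset.univ.filter fun e => tgt e = w.1 ∧ tgt e = u.1) = ∅ := by
          rw [Finset.filter_eq_empty_iff]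
          rintro e - ⟨he1, he2⟩
          exact h (Subtype.ext (he2.symm.trans he1))
        rw [hemp, Finset.card_empty, Nat.cast_zero]
    · congr 1
      norm_cast
      congr 1
      apply Finset.filter_congr
      intro e _
      exact and_comm
  have h2 : (Matrix.of fun w u : {v : V // v ≠ s} => ∑ e ∈ A w, vec e u).det
      = ∑ g ∈ Fintype.piFinset A,
          (Matrix.of fun w u : {v : V // v ≠ s} => vec (g w) u).det := by
    have hrow : (Matrix.of fun w u : {v : V // v ≠ s} => ∑ e ∈ A w, vec e u)
        = fun w => ∑ e ∈ A w, vec e := by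
      funext w u
      simp
    rw [hrow]
    exact (Matrix.detRowAlternating (R := ℤ)
      (n := {v : V // v ≠ s})).toMultilinearMap.map_sum_finset (fun _ e => vec e) A
  have h3 : ∀ g ∈ Fintype.piFinset A,
      (Matrix.of fun w u : {v : V // v ≠ s} => vec (g w) u).det
      = if ∀ v : V, ∃ k, (parentMap src s g)^[k] v = s then 1 else 0 := by
    intro g hg
    have htg : ∀ w : {v : V // v ≠ s}, tgt (g w) = w.1 := by
      intro w
      have h := Fintype.mem_piFinset.mp hg w
      rw [hA] at h
      simpa using h
    have hps : parentMap src s g s = s := by simp [parentMap]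
    rw [← det_functional s (parentMap src s g) hps]
    congr 1
    ext w u
    simp only [Matrix.of_apply, hvec]
    have e1 : (if tgt (g w) = u.1 then (1:ℤ) else 0) = if w = u then 1 else 0 := by
      rw [htg w]
      simp [Subtype.ext_iff]
    have e2 : (if src (g w) = u.1 then (1:ℤ) else 0)
        = if parentMap src s g w.1 = u.1 then 1 else 0 := by
      have hpw : parentMap src s g w.1 = src (g w) := by
        simp only [parentMap]
        rw [dif_neg w.2]
      rw [hpw]
    rw [e1, e2]
  have hcount : ((Fintype.piFinset A).filter fun g =>
        ∀ v : V, ∃ k, (parentMap src s g)^[k] v = s).card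
      = ((Finset.univ : Finset (Finset E)).filter fun X =>
          IsOutBranching src tgt X s).card := by
    have htg' : ∀ g ∈ (Fintype.piFinset A).filter (fun g =>
        ∀ v : V, ∃ k, (parentMap src s g)^[k] v = s),
        ∀ w : {v : V // v ≠ s}, tgt (g w) = w.1 := by
      intro g hg w
      have h := Fintype.mem_piFinset.mp (Finset.mem_filter.mp hg).1 w
      rw [hA] at h
      simpa using h
    have hi : ∀ g (hg : g ∈ (Fintype.piFinset A).filter (fun g =>
        ∀ v : V, ∃ k, (parentMap src s g)^[k] v = s)),
        Finset.image g Finset.univ ∈ (Finset.univ : Finset (Finset E)).filter fun X =>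
          IsOutBranching src tgt X s := by
      intro g hg
      have htg := htg' g hg
      have hgood := (Finset.mem_filter.mp hg).2
      rw [Finset.mem_filter]
      refine ⟨Finset.mem_univ _, ?_, ?_, ?_⟩
      · intro v hv
        refine ⟨g ⟨v, hv⟩, ⟨Finset.mem_image_of_mem g (Finset.mem_univ _), htg _⟩, ?_⟩
        rintro e ⟨he, hte⟩
        obtain ⟨w', -, rfl⟩ := Finset.mem_image.mp he
        have hw' : w' = ⟨v, hv⟩ := Subtype.ext (by rw [← htg w', hte])
        rw [hw']
      · intro e he
        obtain ⟨w', -, rfl⟩ := Finset.mem_image.mp he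
        rw [htg w']
        exact w'.2
      · intro v
        obtain ⟨k, hk⟩ := hgood v
        clear hg
        induction k generalizing v with
        | zero =>
          rw [Function.iterate_zero_apply] at hk
          subst hk
          exact Relation.ReflTransGen.refl
        | succ k ih =>
          by_cases hvs : v = s
          · subst hvs
            exact Relation.ReflTransGen.refl
          · rw [Function.iterate_succ_apply] at hk
            refine (ih _ hk).tail ?_
            refine ⟨g ⟨v, hvs⟩, Finset.mem_image_of_mem g (Finset.mem_univ _), ?_, htg _⟩
            simp only [parentMap]
            rw [dif_neg hvs]
    have hj : ∀ X (hX : X ∈ (Finset.univ : Finset (Finset E)).filter fun X =>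
          IsOutBranching src tgt X s),
        (fun w : {v : V // v ≠ s} =>
            ((Finset.mem_filter.mp hX).2.1 w.1 w.2).exists.choose)
          ∈ (Fintype.piFinset A).filter (fun g =>
            ∀ v : V, ∃ k, (parentMap src s g)^[k] v = s) := by
      intro X hX
      have hb := (Finset.mem_filter.mp hX).2
      set jg : {v : V // v ≠ s} → E := fun w => ((Finset.mem_filter.mp hX).2.1 w.1 w.2).exists.choose
        with hjg
      have hspec : ∀ w : {v : V // v ≠ s}, jg w ∈ X ∧ tgt (jg w) = w.1 := fun w =>
        ((Finset.mem_filter.mp hX).2.1 w.1 w.2).exists.choose_spec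
      rw [Finset.mem_filter]
      constructor
      · rw [Fintype.mem_piFinset]
        intro w
        rw [hA]
        simp [(hspec w).2]
      · intro v
        have hreach := hb.2.2 v
        induction hreach with
        | refl => exact ⟨0, rfl⟩
        | tail hab hbc ih =>
          rename_i b c
          obtain ⟨e, heX, hsrc, htgt⟩ := hbc
          obtain ⟨k, hk⟩ := ih
          have hcs : c ≠ s := htgt ▸ hb.2.1 e heX
          have hpc : parentMap src s jg c = b := by
            simp only [parentMap]
            rw [dif_neg hcs]
            have he' : e = jg ⟨c, hcs⟩ :=
              (hb.1 c hcs).unique ⟨heX, htgt⟩ ⟨(hspec ⟨c, hcs⟩).1, (hspec ⟨c, hcs⟩).2⟩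
            rw [← he', hsrc]
          exact ⟨k + 1, by rw [Function.iterate_succ_apply, hpc, hk]⟩
    refine Finset.card_bij' (fun g _ => Finset.image g Finset.univ)
      (fun X hX => fun w : {v : V // v ≠ s} =>
        ((Finset.mem_filter.mp hX).2.1 w.1 w.2).exists.choose) hi hj ?_ ?_
    · intro g hg
      have htg := htg' g hg
      funext w
      exact choose_eq ((Finset.mem_filter.mp (hi g hg)).2.1 w.1 w.2)
        ⟨Finset.mem_image_of_mem g (Finset.mem_univ w), htg w⟩
    · intro X hX
      have hb := (Finset.mem_filter.mp hX).2
      ext e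
      simp only [Finset.mem_image, Finset.mem_univ, true_and]
      constructor
      · rintro ⟨w, rfl⟩
        exact (((Finset.mem_filter.mp hX).2.1 w.1 w.2).exists.choose_spec).1
      · intro he
        have hts : tgt e ≠ s := hb.2.1 e he
        exact ⟨⟨tgt e, hts⟩, choose_eq ((Finset.mem_filter.mp hX).2.1 (tgt e) hts) ⟨he, rfl⟩⟩
  rw [h1, Matrix.det_transpose, h2, Finset.sum_congr rfl h3, Finset.sum_boole, hcount]
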